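/- Fix α ∈ [0, 2]. There exist constants 0 < c ≤ C such that for every real x with |x| > 1/2, c · |n_x|^α / (1 + |n_x|^α |x − n_x|) ≤ e^{θ(x)} ≤ C · |n_x|^α / (1 + |n_x|^α |x − n_x|). -/

import Mathlib

open MeasureTheory intervalIntegral Real Set

/-- The integer closest to `x`, taking the smaller one when `x` is a half-integer. -/
noncomputable def nearestInt (x : ℝ) : ℤ := ⌈x - 1 / 2⌉

/-- The summand `θ_n(x)`. -/
noncomputable def thetaN (α : ℝ) (n : ℤ) (x : ℝ) : ℝ :=
  if n = 0 then
    (1 / Real.pi) * ∫ t in (-(5/4) : ℝ)..(5/4 : ℝ),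
      (Real.arctan (t + x) - Real.arctan x) / t
  else
    (1 / Real.pi) * ∫ t in (-(5/4) : ℝ)..(5/4 : ℝ),
      (Real.arctan (|(n : ℝ)| ^ α * (t + x - (n : ℝ))) -
        Real.arctan (|(n : ℝ)| ^ α * (x - (n : ℝ)))) / t


lemma arctan_diff_le' {w u M : ℝ} (hwu : w ≤ u) (hM : ∀ τ ∈ Set.Icc w u, M^2 ≤ τ^2) :
    arctan u - arctan w ≤ (u - w) / (1 + M^2) := by
  have hFTC : arctan u - arctan w = ∫ τ in w..u, 1/(1+τ^2) := by
    refine (integral_eq_sub_of_hasDerivAt (fun τ _ => Real.hasDerivAt_arctan τ) ?_).symm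
    apply Continuous.intervalIntegrable
    exact continuous_const.div (by continuity) (fun τ => by positivity)
  rw [hFTC]
  have h2 : ∫ τ in w..u, (1:ℝ)/(1+M^2) = (u - w) * (1/(1+M^2)) := by
    simp [intervalIntegral.integral_const, smul_eq_mul]
  calc ∫ τ in w..u, 1/(1+τ^2) ≤ ∫ τ in w..u, 1/(1+M^2) := by
        apply intervalIntegral.integral_mono_on hwu
        · apply Continuous.intervalIntegrable
          exact continuous_const.div (by continuity) (fun τ => by positivity)
        · apply Continuous.intervalIntegrable; continuity
        · intro τ hτ
          have := hM τ hτ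
          exact one_div_le_one_div_of_le (by positivity) (by linarith)
      _ = (u-w)/(1+M^2) := by rw [h2]; ring
noncomputable def Df (a s σ : ℝ) : ℝ :=
  arctan (a*(s+σ*(5/4))) - arctan (a*(s-σ*(5/4)))

lemma arctan_le_self' {z : ℝ} (hz : 0 ≤ z) : arctan z ≤ z := by
  have := arctan_diff_le' (w := 0) (u := z) (M := 0) hz (fun τ _ => by nlinarith [sq_nonneg τ])
  simpa using this

lemma arctan_lower {z : ℝ} (hz : 0 < z) : π/2 - 1/z ≤ arctan z := by
  have h1 : arctan z⁻¹ = π/2 - arctan z := Real.arctan_inv_of_pos hz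
  have h2 : arctan z⁻¹ ≤ z⁻¹ := arctan_le_self' (by positivity)
  rw [h1] at h2
  rw [one_div]
  linarith

lemma Df_nonneg {a s σ : ℝ} (ha : 0 < a) (hσ : 0 ≤ σ) : 0 ≤ Df a s σ := by
  have : a*(s-σ*(5/4)) ≤ a*(s+σ*(5/4)) := by nlinarith
  simpa [Df, sub_nonneg] using Real.arctan_strictMono.monotone this

lemma Df_le_pi {a s σ : ℝ} : Df a s σ ≤ π := by
  have h1 := Real.arctan_lt_pi_div_two (a*(s+σ*(5/4)))
  have h2 := Real.neg_pi_div_two_lt_arctan (a*(s-σ*(5/4)))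
  unfold Df; linarith

lemma Df_le_lip {a s σ : ℝ} (ha : 0 < a) (hσ : 0 ≤ σ) : Df a s σ ≤ (5/2)*a*σ := by
  have h : a*(s-σ*(5/4)) ≤ a*(s+σ*(5/4)) := by nlinarith
  have := arctan_diff_le' (M := 0) h (fun τ _ => by nlinarith [sq_nonneg τ])
  unfold Df
  calc arctan (a*(s+σ*(5/4))) - arctan (a*(s-σ*(5/4)))
      ≤ (a*(s+σ*(5/4)) - a*(s-σ*(5/4)))/(1+(0:ℝ)^2) := this
    _ = (5/2)*a*σ := by ring

lemma Df_le_far {a s σ : ℝ} (ha : 0 < a) (hσ : 0 ≤ σ) (hs : 0 < s) (hfar : σ*(5/4) ≤ s/2) :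
    Df a s σ ≤ (5/2)*a*σ/(1+(a*s/2)^2) := by
  have h : a*(s-σ*(5/4)) ≤ a*(s+σ*(5/4)) := by nlinarith
  have hM : ∀ τ ∈ Set.Icc (a*(s-σ*(5/4))) (a*(s+σ*(5/4))), (a*s/2)^2 ≤ τ^2 := by
    intro τ hτ
    have h1 : a*s/2 ≤ τ := by nlinarith [hτ.1]
    have h0 : 0 ≤ a*s/2 := by positivity
    exact pow_le_pow_left₀ h0 h1 2
  have := arctan_diff_le' h hM
  unfold Df
  calc arctan (a*(s+σ*(5/4))) - arctan (a*(s-σ*(5/4)))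
      ≤ (a*(s+σ*(5/4)) - a*(s-σ*(5/4)))/(1+(a*s/2)^2) := this
    _ = (5/2)*a*σ/(1+(a*s/2)^2) := by ring

lemma Df_lower {a s σ : ℝ} (ha : 0 < a) (hσ : 0 < σ) (hs : 0 ≤ s) (h2s : 2*s ≤ σ*(5/4)) :
    π - (16/5)/(a*σ) ≤ Df a s σ := by
  have hz : 0 < a*(σ*(5/4))/2 := by positivity
  have hl := arctan_lower hz
  have h1 : arctan (a*(σ*(5/4))/2) ≤ arctan (a*(s+σ*(5/4))) := by
    apply Real.arctan_strictMono.monotone; nlinarith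
  have h2 : arctan (a*(σ*(5/4))/2) ≤ - arctan (a*(s-σ*(5/4))) := by
    rw [← Real.arctan_neg]
    apply Real.arctan_strictMono.monotone; nlinarith
  have he : 1/(a*(σ*(5/4))/2) = (8/5)/(a*σ) := by
    field_simp; ring
  unfold Df
  rw [he] at hl
  have : (16/5)/(a*σ) = 2*((8/5)/(a*σ)) := by ring
  linarith

lemma intgI {a : ℝ} (s : ℝ) (ha : 0 < a) :
    IntervalIntegrable (fun σ => Df a s σ/σ) volume 0 1 := by
  rw [intervalIntegrable_iff_integrableOn_Ioc_of_le (by norm_num)]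
  apply MeasureTheory.Integrable.mono' (g := fun _ => (5/2)*a)
    (MeasureTheory.integrable_const _)
  · have hc : Continuous (fun σ => Df a s σ) := by unfold Df; continuity
    exact (hc.measurable.div measurable_id).aestronglyMeasurable
  · rw [MeasureTheory.ae_restrict_iff' measurableSet_Ioc]
    filter_upwards with σ hσ
    rw [Real.norm_eq_abs, abs_of_nonneg (div_nonneg (Df_nonneg ha hσ.1.le) hσ.1.le)]
    rw [div_le_iff₀ hσ.1]
    linarith [Df_le_lip (a:=a) (s:=s) (σ:=σ) ha hσ.1.le]


noncomputable def gI (a s : ℝ) : ℝ :=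
  ∫ σ in (0:ℝ)..1, (arctan (a*(s+σ*(5/4))) - arctan (a*(s-σ*(5/4))))/σ
lemma gI_eq (a s : ℝ) : gI a s = ∫ σ in (0:ℝ)..1, Df a s σ/σ := rfl

lemma intgI_sub {a : ℝ} (s : ℝ) (ha : 0 < a) {c d : ℝ} (h0 : 0 ≤ c) (hcd : c ≤ d) (h1 : d ≤ 1) :
    IntervalIntegrable (fun σ => Df a s σ/σ) volume c d := by
  exact (intgI s ha).mono_set (by
      rw [Set.uIcc_of_le hcd, Set.uIcc_of_le (by norm_num : (0:ℝ) ≤ 1)]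
      exact Set.Icc_subset_Icc h0 h1)

lemma piece_nonneg {a : ℝ} (s : ℝ) (ha : 0 < a) {c d : ℝ} (hc : 0 ≤ c) (hcd : c ≤ d) :
    0 ≤ ∫ σ in c..d, Df a s σ/σ := by
  apply intervalIntegral.integral_nonneg hcd
  intro σ hσ
  exact div_nonneg (Df_nonneg ha (hc.trans hσ.1)) (hc.trans hσ.1)

lemma split_gI {a s c : ℝ} (ha : 0 < a) (h0 : 0 ≤ c) (h1 : c ≤ 1) :
    gI a s = (∫ σ in (0:ℝ)..c, Df a s σ/σ) + ∫ σ in c..1, Df a s σ/σ := by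
  rw [gI_eq]
  exact (intervalIntegral.integral_add_adjacent_intervals
    (intgI_sub s ha le_rfl h0 h1) (intgI_sub s ha h0 h1 le_rfl)).symm

lemma gI_nonneg {a : ℝ} (s : ℝ) (ha : 0 < a) : 0 ≤ gI a s := by
  rw [gI_eq]; exact piece_nonneg s ha le_rfl (by norm_num)

lemma gI_even (a s : ℝ) : gI a (-s) = gI a s := by
  unfold gI
  apply intervalIntegral.integral_congr
  intro σ _
  have e1 : a*(-s+σ*(5/4)) = -(a*(s-σ*(5/4))) := by ring
  have e2 : a*(-s-σ*(5/4)) = -(a*(s+σ*(5/4))) := by ring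
  simp only [e1, e2, Real.arctan_neg]
  ring

lemma piece_const {a s c B : ℝ} (ha : 0 < a) (h0 : 0 ≤ c) (h1 : c ≤ 1) (hB : 0 ≤ B)
    (hpt : ∀ σ, 0 < σ → σ ≤ c → Df a s σ/σ ≤ B) :
    (∫ σ in (0:ℝ)..c, Df a s σ/σ) ≤ c * B := by
  have : (∫ σ in (0:ℝ)..c, Df a s σ/σ) ≤ ∫ _σ in (0:ℝ)..c, B := by
    apply intervalIntegral.integral_mono_on h0 (intgI_sub s ha le_rfl h0 h1)
      intervalIntegrable_const
    intro σ hσ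
    rcases eq_or_lt_of_le hσ.1 with h | h
    · rw [← h]
      have : Df a s 0 = 0 := by simp [Df]
      simp [this]; exact hB
    · exact hpt σ h hσ.2
  simpa using this

lemma piece_log {a s c : ℝ} (ha : 0 < a) (hc : 0 < c) (hc1 : c ≤ 1) :
    (∫ σ in c..1, Df a s σ/σ) ≤ π * Real.log (1/c) := by
  have hInt2 : IntervalIntegrable (fun σ => π*(1/σ)) volume c 1 := by
    apply ContinuousOn.intervalIntegrable
    apply ContinuousOn.mul continuousOn_const
    apply ContinuousOn.div continuousOn_const continuousOn_id
    intro σ hσ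
    rw [Set.uIcc_of_le hc1] at hσ
    exact ne_of_gt (lt_of_lt_of_le hc hσ.1)
  calc (∫ σ in c..1, Df a s σ/σ) ≤ ∫ σ in c..1, π*(1/σ) := by
        apply intervalIntegral.integral_mono_on hc1 (intgI_sub s ha hc.le hc1 le_rfl) hInt2
        intro σ hσ
        have hσ0 : 0 < σ := lt_of_lt_of_le hc hσ.1
        rw [mul_one_div]
        exact (div_le_div_iff_of_pos_right hσ0).mpr Df_le_pi
      _ = π * Real.log (1/c) := by
        have h0 : (0:ℝ) ∉ Set.uIcc c 1 := by
          rw [Set.uIcc_of_le hc1]; intro hmem; exact absurd hmem.1 (by linarith)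
        rw [intervalIntegral.integral_const_mul, integral_one_div h0]

lemma log_ratio_eq {a s : ℝ} (ha : 0 < a) (hs : 0 ≤ s) :
    a/(1+a*s) = (1/a + s)⁻¹ := by
  have h1 : 1/a + s = (1+a*s)/a := by field_simp
  rw [h1, inv_div]

lemma Dfdiv_le_lip {a s σ : ℝ} (ha : 0 < a) (hσ : 0 < σ) : Df a s σ/σ ≤ (5/2)*a := by
  rw [div_le_iff₀ hσ]
  linarith [Df_le_lip (a:=a) (s:=s) (σ:=σ) ha hσ.le]

lemma Dfdiv_le_far {a s σ : ℝ} (ha : 0 < a) (hσ : 0 < σ) (hs : 0 < s)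
    (hfar : σ*(5/4) ≤ s/2) : Df a s σ/σ ≤ 10/(a*s^2) := by
  rw [div_le_iff₀ hσ]
  have h1 := Df_le_far ha hσ.le hs hfar
  have h2 : (5/2)*a*σ/(1+(a*s/2)^2) ≤ (5/2)*a*σ/((a*s/2)^2) := by
    apply div_le_div_of_nonneg_left (by positivity) (by positivity) (by linarith)
  have h3 : (5/2)*a*σ/((a*s/2)^2) = 10/(a*s^2)*σ := by
    field_simp; ring
  linarith

lemma gI_upper0 {a s : ℝ} (ha : 1 ≤ a) (h0 : 0 ≤ s) (hs : s ≤ 5/2) :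
    gI a s ≤ π * Real.log (a/(1+a*s)) + 9*π := by
  have ha0 : (0:ℝ) < a := by linarith
  have hπ := Real.pi_gt_three
  rw [log_ratio_eq ha0 h0]
  set ρ : ℝ := 1/a + s with hρ
  have hρ0 : 0 < ρ := by positivity
  have hlog58 : Real.log (5/4) ≤ 1/4 := by
    have := Real.log_le_sub_one_of_pos (x := (5/4:ℝ)) (by norm_num); linarith
  have hlog2 : Real.log 2 ≤ 1 := by
    have := Real.log_le_sub_one_of_pos (x := (2:ℝ)) (by norm_num); linarith
  have hlog52 : Real.log (5/2) ≤ 3/2 := by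
    have := Real.log_le_sub_one_of_pos (x := (5/2:ℝ)) (by norm_num); linarith
  rcases le_or_gt s (1/a) with hcase | hcase
  · -- small s
    set c : ℝ := 4/(5*a) with hc
    have hc0 : 0 < c := by positivity
    have hc1 : c ≤ 1 := by rw [hc]; rw [div_le_one (by positivity)]; linarith
    rw [split_gI ha0 hc0.le hc1]
    have p1 : (∫ σ in (0:ℝ)..c, Df a s σ/σ) ≤ c * ((5/2)*a) :=
      piece_const ha0 hc0.le hc1 (by positivity) (fun σ hσ _ => Dfdiv_le_lip ha0 hσ)
    have p2 := piece_log (a:=a) (s:=s) ha0 hc0 hc1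
    have e1 : c * ((5/2)*a) = 2 := by rw [hc]; field_simp; norm_num
    have e2 : (1:ℝ)/c = (5/4)*a := by rw [hc]; field_simp
    rw [e2] at p2
    -- log (5/4 * a) = log (5/4) + log a
    have e3 : Real.log ((5/4)*a) = Real.log (5/4) + Real.log a :=
      Real.log_mul (by norm_num) (by positivity)
    -- log ρ⁻¹ ≥ log (a/2)
    have e4 : Real.log (a/2) ≤ Real.log ρ⁻¹ := by
      apply Real.log_le_log (by positivity)
      have hρle : ρ ≤ 2/a := by
        have h2a : (2:ℝ)/a = 1/a + 1/a := by ring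
        rw [hρ, h2a]; linarith
      calc (a/2) = (2/a)⁻¹ := by rw [inv_div]
        _ ≤ ρ⁻¹ := inv_anti₀ hρ0 hρle
    have e5 : Real.log (a/2) = Real.log a - Real.log 2 :=
      Real.log_div (by positivity) (by norm_num)
    have key : π * Real.log ((5/4)*a) ≤ π * (Real.log ρ⁻¹ + Real.log 2 + 1/4) := by
      apply mul_le_mul_of_nonneg_left _ Real.pi_pos.le
      rw [e3]; linarith
    have key2 : π * (Real.log 2 + 1/4) ≤ π * (5/4) :=
      mul_le_mul_of_nonneg_left (by linarith) Real.pi_pos.le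
    have key3 : π * (Real.log ρ⁻¹ + Real.log 2 + 1/4)
        = π * Real.log ρ⁻¹ + π * (Real.log 2 + 1/4) := by ring
    linarith
  · -- large s
    have hs0 : 0 < s := lt_trans (by positivity) hcase
    have has : 1 < a*s := by
      rw [div_lt_iff₀ ha0] at hcase; linarith [hcase]
    set c : ℝ := (2/5)*s with hc
    have hc0 : 0 < c := by positivity
    have hc1 : c ≤ 1 := by rw [hc]; linarith
    rw [split_gI ha0 hc0.le hc1]
    have p1 : (∫ σ in (0:ℝ)..c, Df a s σ/σ) ≤ c * (10/(a*s^2)) := by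
      apply piece_const ha0 hc0.le hc1 (by positivity)
      intro σ hσ hσc
      exact Dfdiv_le_far ha0 hσ hs0 (by rw [hc] at hσc; linarith)
    have e1 : c * (10/(a*s^2)) ≤ 4 := by
      rw [hc]
      have : (2/5)*s * (10/(a*s^2)) = 4/(a*s) := by field_simp; ring
      rw [this]
      rw [div_le_iff₀ (by positivity)]
      linarith
    have p2 := piece_log (a:=a) (s:=s) ha0 hc0 hc1
    have e2 : Real.log (1/c) = Real.log (5/2) - Real.log s := by
      rw [hc]
      rw [show (1:ℝ)/((2/5)*s) = (5/2)/s by field_simp]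
      exact Real.log_div (by norm_num) (by positivity)
    have e4 : -(Real.log 2 + Real.log s) ≤ Real.log ρ⁻¹ := by
      have hρle : ρ ≤ 2*s := by
        rw [hρ]
        have : 1/a < s := hcase
        linarith
      have : Real.log ((2*s)⁻¹) ≤ Real.log ρ⁻¹ := by
        apply Real.log_le_log (by positivity)
        exact inv_anti₀ hρ0 hρle
      rw [Real.log_inv, Real.log_mul (by norm_num) (by positivity), neg_add] at this
      linarith
      
    have key : π * Real.log (1/c) ≤ π * (Real.log ρ⁻¹ + Real.log 2 + Real.log (5/2)) := by
      apply mul_le_mul_of_nonneg_left _ Real.pi_pos.le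
      rw [e2]; linarith
    have key2 : π * (Real.log 2 + Real.log (5/2)) ≤ π * (5/2) :=
      mul_le_mul_of_nonneg_left (by linarith) Real.pi_pos.le
    have key3 : π * (Real.log ρ⁻¹ + Real.log 2 + Real.log (5/2))
        = π * Real.log ρ⁻¹ + π * (Real.log 2 + Real.log (5/2)) := by ring
    linarith


lemma gI_far0 {a s : ℝ} (ha : 1 ≤ a) (hs : 5/2 ≤ s) : gI a s ≤ 10/s^2 := by
  have ha0 : (0:ℝ) < a := by linarith
  have hs0 : (0:ℝ) < s := by linarith
  rw [gI_eq]
  have p1 : (∫ σ in (0:ℝ)..1, Df a s σ/σ) ≤ 1 * (10/(a*s^2)) := by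
    apply piece_const ha0 (by norm_num) le_rfl (by positivity)
    intro σ hσ hσ1
    exact Dfdiv_le_far ha0 hσ hs0 (by linarith)
  have : 10/(a*s^2) ≤ 10/s^2 := by
    apply div_le_div_of_nonneg_left (by norm_num) (by positivity)
    nlinarith
  linarith

lemma gI_lower0 {a s : ℝ} (ha : 1 ≤ a) (h0 : 0 ≤ s) (hs : s ≤ 1/2) :
    π * Real.log (a/(1+a*s)) - 9*π ≤ gI a s := by
  have ha0 : (0:ℝ) < a := by linarith
  have hπ := Real.pi_gt_three
  have hπ0 := Real.pi_pos
  rw [log_ratio_eq ha0 h0]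
  set ρ : ℝ := 1/a + s with hρ
  have hρ0 : 0 < ρ := by positivity
  have hinva : 1/a ≤ 1 := by rw [div_le_one ha0]; linarith
  rcases le_or_gt (5/8 : ℝ) ρ with hcase | hcase
  · -- ρ big: trivial since gI ≥ 0
    have h1 : Real.log ρ⁻¹ ≤ Real.log (8/5) := by
      apply Real.log_le_log (by positivity)
      rw [inv_le_comm₀ hρ0 (by norm_num)]
      linarith
    have h2 : Real.log (8/5) ≤ 3/5 := by
      have := Real.log_le_sub_one_of_pos (x := (8/5:ℝ)) (by norm_num); linarith
    have h3 : π * Real.log ρ⁻¹ ≤ π * (3/5) :=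
      mul_le_mul_of_nonneg_left (by linarith) hπ0.le
    have := gI_nonneg s ha0
    nlinarith
  · -- main case
    set c : ℝ := (8/5)*ρ with hc
    have hc0 : 0 < c := by positivity
    have hc1 : c ≤ 1 := by rw [hc]; linarith
    have hptw : ∀ σ ∈ Set.Icc c 1, π*(1/σ) - (16/5)*(1/a)*(1/σ^2) ≤ Df a s σ/σ := by
      intro σ hσ
      have hσ0 : 0 < σ := lt_of_lt_of_le hc0 hσ.1
      have h2s : 2*s ≤ σ*(5/4) := by
        have h1 : c*(5/4) ≤ σ*(5/4) := by linarith [hσ.1]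
        have hcs : c*(5/4) = 2*ρ := by rw [hc]; ring
        have h1a : (0:ℝ) < 1/a := by positivity
        have h2 : 2*s ≤ 2*ρ := by rw [hρ]; linarith
        linarith
      have hD := Df_lower ha0 hσ0 h0 h2s
      rw [le_div_iff₀ hσ0]
      have e : (π*(1/σ) - (16/5)*(1/a)*(1/σ^2))*σ = π - (16/5)/(a*σ) := by
        field_simp
      rw [e]
      exact hD
    -- integrability of the comparison function on [c,1]
    have hne : ∀ σ ∈ Set.uIcc c 1, σ ≠ 0 := by
      intro σ hσ
      rw [Set.uIcc_of_le hc1] at hσ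
      exact ne_of_gt (lt_of_lt_of_le hc0 hσ.1)
    have hInt1 : IntervalIntegrable (fun σ : ℝ => π*(1/σ)) volume c 1 := by
      apply ContinuousOn.intervalIntegrable
      exact continuousOn_const.mul (continuousOn_const.div continuousOn_id hne)
    have hInt2 : IntervalIntegrable (fun σ : ℝ => (16/5)*(1/a)*(1/σ^2)) volume c 1 := by
      apply ContinuousOn.intervalIntegrable
      exact continuousOn_const.mul (continuousOn_const.div (continuousOn_pow 2)
        (fun σ hσ => pow_ne_zero 2 (hne σ hσ)))
    have hmono : (∫ σ in c..1, (π*(1/σ) - (16/5)*(1/a)*(1/σ^2)))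
        ≤ ∫ σ in c..1, Df a s σ/σ :=
      intervalIntegral.integral_mono_on hc1 (hInt1.sub hInt2)
        (intgI_sub s ha0 hc0.le hc1 le_rfl) hptw
    -- compute the comparison integral
    have hval1 : (∫ σ in c..1, π*(1/σ)) = π * Real.log (1/c) := by
      have h0' : (0:ℝ) ∉ Set.uIcc c 1 := fun h => (hne 0 h) rfl
      rw [intervalIntegral.integral_const_mul, integral_one_div h0']
    have hval2 : (∫ σ in c..1, (16/5)*(1/a)*(1/σ^2)) = (16/5)*(1/a)*(1/c - 1) := by
      rw [intervalIntegral.integral_const_mul]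
      have hder : ∀ σ ∈ Set.uIcc c 1, HasDerivAt (fun u : ℝ => -(1/u)) (1/σ^2) σ := by
        intro σ hσ
        have h := (hasDerivAt_inv (hne σ hσ)).neg
        simpa [one_div, Pi.neg_def] using h
      have := integral_eq_sub_of_hasDerivAt hder
        (ContinuousOn.intervalIntegrable (continuousOn_const.div (continuousOn_pow 2)
          (fun σ hσ => pow_ne_zero 2 (hne σ hσ))))
      rw [this]
      ring
    have hval : (∫ σ in c..1, (π*(1/σ) - (16/5)*(1/a)*(1/σ^2)))
        = π * Real.log (1/c) - (16/5)*(1/a)*(1/c - 1) := by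
      rw [intervalIntegral.integral_sub hInt1 hInt2, hval1, hval2]
    -- assemble
    rw [split_gI ha0 hc0.le hc1]
    have hsplit0 : 0 ≤ ∫ σ in (0:ℝ)..c, Df a s σ/σ := piece_nonneg s ha0 le_rfl hc0.le
    have hlog : Real.log (1/c) = Real.log ρ⁻¹ - Real.log (8/5) := by
      rw [one_div, hc, mul_inv, Real.log_mul (by norm_num) (by positivity),
        Real.log_inv, Real.log_inv]
      ring
    have hc2 : (16/5)*(1/a)*(1/c - 1) ≤ 2 := by
      have h1c : 1/c = 5/(8*ρ) := by rw [hc]; field_simp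
      rw [h1c]
      have haρ : 1 ≤ a*ρ := by
        rw [hρ]
        have : a*(1/a + s) = 1 + a*s := by field_simp
        rw [this]; nlinarith
      have e : (16/5)*(1/a)*(5/(8*ρ) - 1) ≤ (16/5)*(1/a)*(5/(8*ρ)) := by
        apply mul_le_mul_of_nonneg_left _ (by positivity)
        linarith [one_div_pos.mpr ha0]
      have e2 : (16/5)*(1/a)*(5/(8*ρ)) = 2/(a*ρ) := by field_simp; ring
      have e3 : 2/(a*ρ) ≤ 2 := by
        rw [div_le_iff₀ (by positivity)]; linarith
      linarith
    have hlog85 : Real.log (8/5) ≤ 3/5 := by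
      have := Real.log_le_sub_one_of_pos (x := (8/5:ℝ)) (by norm_num); linarith
    have key : π * Real.log (1/c) = π * Real.log ρ⁻¹ - π * Real.log (8/5) := by
      rw [hlog]; ring
    have key2 : π * Real.log (8/5) ≤ π * (3/5) :=
      mul_le_mul_of_nonneg_left hlog85 hπ0.le
    linarith


lemma keyrep (a s : ℝ) (ha : 0 < a) :
    (∫ t in (-(5/4):ℝ)..(5/4), (arctan (a*(t+s)) - arctan (a*s))/t) = gI a s := by
  have hd : ∀ t σ : ℝ, (0:ℝ) < 1 + (a*(s+σ*t))^2 := fun t σ => by positivity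
  have hK : Continuous (fun p : ℝ × ℝ => a / (1 + (a*(s + p.2*p.1))^2)) := by
    apply continuous_const.div (by continuity) (fun p => by positivity)
  -- step 1 : inner σ-representation of the difference quotient
  have step1 : ∀ t : ℝ, arctan (a*(t+s)) - arctan (a*s)
      = ∫ σ in (0:ℝ)..1, a*t/(1+(a*(s+σ*t))^2) := by
    intro t
    have hder : ∀ σ ∈ Set.uIcc (0:ℝ) 1, HasDerivAt (fun σ => arctan (a*(s+σ*t)))
        (a*t/(1+(a*(s+σ*t))^2)) σ := by
      intro σ _
      have h1 : HasDerivAt (fun σ : ℝ => a*(s+σ*t)) (a*t) σ := by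
        simpa using (((hasDerivAt_id σ).mul_const t).const_add s).const_mul a
      simpa [div_eq_inv_mul, one_div] using h1.arctan
    have := integral_eq_sub_of_hasDerivAt (fun σ hσ => hder σ hσ)
      (by
        apply Continuous.intervalIntegrable
        exact continuous_const.div (by continuity) (fun σ => by positivity))
    rw [this]; norm_num [add_comm t s]
  -- step 2: divide by t
  have step2 : ∀ t : ℝ, t ≠ 0 → (arctan (a*(t+s)) - arctan (a*s))/t
      = ∫ σ in (0:ℝ)..1, a/(1+(a*(s+σ*t))^2) := by
    intro t ht
    rw [step1 t, ← intervalIntegral.integral_div]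
    apply intervalIntegral.integral_congr
    intro σ _
    show a * t / (1 + (a*(s+σ*t))^2) / t = a / (1 + (a*(s+σ*t))^2)
    field_simp
  -- step 3: replace integrand a.e.
  have step3 : (∫ t in (-(5/4):ℝ)..(5/4), (arctan (a*(t+s)) - arctan (a*s))/t)
      = ∫ t in (-(5/4):ℝ)..(5/4), ∫ σ in (0:ℝ)..1, a/(1+(a*(s+σ*t))^2) := by
    apply intervalIntegral.integral_congr_ae
    have h0 : ∀ᵐ t : ℝ, t ≠ 0 := by
      rw [MeasureTheory.ae_iff]
      convert Real.volume_singleton (a := 0) using 2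
      ext t; simp
    filter_upwards [h0] with t ht _
    exact step2 t ht
  -- step 4: Fubini
  have step4 : (∫ t in (-(5/4):ℝ)..(5/4), ∫ σ in (0:ℝ)..1, a/(1+(a*(s+σ*t))^2))
      = ∫ σ in (0:ℝ)..1, ∫ t in (-(5/4):ℝ)..(5/4), a/(1+(a*(s+σ*t))^2) := by
    have hle1 : (-(5/4):ℝ) ≤ 5/4 := by norm_num
    have hle2 : (0:ℝ) ≤ 1 := by norm_num
    rw [intervalIntegral.integral_of_le hle1, intervalIntegral.integral_of_le hle2]
    simp_rw [intervalIntegral.integral_of_le hle2, intervalIntegral.integral_of_le hle1]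
    apply MeasureTheory.integral_integral_swap
    rw [MeasureTheory.Measure.prod_restrict]
    apply MeasureTheory.IntegrableOn.mono_set
      (t := Set.Icc (-(5/4):ℝ) (5/4) ×ˢ Set.Icc (0:ℝ) 1)
    · exact (hK.comp (continuous_fst.prodMk continuous_snd)).continuousOn.integrableOn_compact
        (isCompact_Icc.prod isCompact_Icc)
    · exact Set.prod_mono Set.Ioc_subset_Icc_self Set.Ioc_subset_Icc_self
  -- step 5: inner t-integral via FTC, for σ > 0
  have step5 : ∀ σ : ℝ, 0 < σ → (∫ t in (-(5/4):ℝ)..(5/4), a/(1+(a*(s+σ*t))^2))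
      = (arctan (a*(s+σ*(5/4))) - arctan (a*(s-σ*(5/4))))/σ := by
    intro σ hσ
    have hder : ∀ t ∈ Set.uIcc (-(5/4):ℝ) (5/4),
        HasDerivAt (fun t => arctan (a*(s+σ*t)) / σ) (a/(1+(a*(s+σ*t))^2)) t := by
      intro t _
      have h1 : HasDerivAt (fun t : ℝ => a*(s+σ*t)) (a*σ) t := by
        simpa using (((hasDerivAt_id t).const_mul σ).const_add s).const_mul a
      have h2 := h1.arctan.div_const σ
      have e : 1 / (1 + (a*(s+σ*t))^2) * (a*σ) / σ = a/(1+(a*(s+σ*t))^2) := by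
        rw [mul_div_assoc, mul_div_cancel_right₀ _ hσ.ne']
        ring
      rw [e] at h2
      exact h2
    have := integral_eq_sub_of_hasDerivAt hder
      (by
        apply Continuous.intervalIntegrable
        exact continuous_const.div (by continuity) (fun t => by positivity))
    rw [this]
    rw [← sub_div]
    ring_nf
  -- step 6: put together
  rw [step3, step4, gI]
  apply intervalIntegral.integral_congr_ae
  have hIoc : Set.uIoc (0:ℝ) 1 = Set.Ioc (0:ℝ) 1 := Set.uIoc_of_le (by norm_num)
  filter_upwards with σ hσ
  rw [hIoc] at hσ
  exact step5 σ hσ.1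

lemma gI_abs (a s : ℝ) : gI a s = gI a |s| := by
  rcases abs_cases s with ⟨h, _⟩ | ⟨h, _⟩
  · rw [h]
  · rw [h, gI_even]

lemma gI_upper' {a s : ℝ} (ha : 1 ≤ a) (hs : |s| ≤ 5/2) :
    gI a s ≤ π * Real.log (a/(1+a*|s|)) + 9*π := by
  rw [gI_abs]
  exact gI_upper0 ha (abs_nonneg s) hs

lemma gI_far' {a s : ℝ} (ha : 1 ≤ a) (hs : 5/2 ≤ |s|) : gI a s ≤ 10/s^2 := by
  rw [gI_abs]
  have := gI_far0 ha hs
  rwa [sq_abs] at this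

lemma gI_lower' {a s : ℝ} (ha : 1 ≤ a) (hs : |s| ≤ 1/2) :
    π * Real.log (a/(1+a*|s|)) - 9*π ≤ gI a s := by
  rw [gI_abs]
  exact gI_lower0 ha (abs_nonneg s) hs

lemma hfun_aux : Summable (fun k : ℤ => (if |k| ≤ 2 then (10:ℝ) else 0) + 40/((k:ℝ))^2) := by
  apply Summable.add
  · apply summable_of_ne_finset_zero (s := Finset.Icc (-2) 2)
    intro k hk
    rw [Finset.mem_Icc] at hk
    rw [if_neg]
    rw [abs_le]
    omega
  · have h1 : Summable (fun n : ℤ => 1/((n:ℝ))^2) :=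
      Real.summable_one_div_int_pow.mpr (by norm_num)
    apply (h1.mul_left 40).congr
    intro k
    rw [mul_one_div]

noncomputable def hfun (k : ℤ) : ℝ :=
  if k = 0 then 0 else if |k| ≤ 2 then 10 else 40/((k:ℝ))^2

lemma hfun_nonneg (k : ℤ) : 0 ≤ hfun k := by
  unfold hfun
  split_ifs <;> positivity

lemma hfun_summable : Summable hfun := by
  apply Summable.of_nonneg_of_le hfun_nonneg _ hfun_aux
  intro k
  unfold hfun
  have hpos : (0:ℝ) ≤ 40/((k:ℝ))^2 := by positivity
  split_ifs <;> linarith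

lemma theta_eq0 (α : ℝ) (x : ℝ) : thetaN α 0 x = (1/π) * gI 1 x := by
  unfold thetaN
  rw [if_pos rfl]
  congr 1
  rw [← keyrep 1 x one_pos]
  apply intervalIntegral.integral_congr
  intro t _
  norm_num

lemma theta_eqn (α : ℝ) (n : ℤ) (x : ℝ) (hn : n ≠ 0) :
    thetaN α n x = (1/π) * gI (|(n:ℝ)|^α) (x - n) := by
  unfold thetaN
  rw [if_neg hn]
  congr 1
  have ha : (0:ℝ) < |(n:ℝ)|^α := by
    apply Real.rpow_pos_of_pos
    rw [abs_pos, Int.cast_ne_zero]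
    exact hn
  rw [← keyrep (|(n:ℝ)|^α) (x - n) ha]
  apply intervalIntegral.integral_congr
  intro t _
  show (arctan (|(n:ℝ)|^α * (t + x - n)) - arctan (|(n:ℝ)|^α * (x - n))) / t
      = (arctan (|(n:ℝ)|^α * (t + (x - n))) - arctan (|(n:ℝ)|^α * (x - n))) / t
  rw [add_sub_assoc]

theorem stmt_18 (α : ℝ) (hα : α ∈ Set.Icc (0:ℝ) 2) :
    ∃ c C : ℝ, 0 < c ∧ c ≤ C ∧ ∀ x : ℝ, 1/2 < |x| →
      c * (|(nearestInt x : ℝ)| ^ α /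
            (1 + |(nearestInt x : ℝ)| ^ α * |x - (nearestInt x : ℝ)|)) ≤
          Real.exp (∑' n : ℤ, thetaN α n x) ∧
      Real.exp (∑' n : ℤ, thetaN α n x) ≤
        C * (|(nearestInt x : ℝ)| ^ α /
              (1 + |(nearestInt x : ℝ)| ^ α * |x - (nearestInt x : ℝ)|)) := by
  have hπ0 := Real.pi_pos
  have hπ3 := Real.pi_gt_three
  set T : ℝ := ∑' k : ℤ, hfun k with hTdef
  have hT0 : 0 ≤ T := tsum_nonneg hfun_nonneg
  refine ⟨Real.exp (-9), Real.exp (9 + T), Real.exp_pos _, Real.exp_le_exp.mpr (by linarith), ?_⟩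
  intro x hx
  set m : ℤ := nearestInt x with hmdef
  have hceil1 : x - 1/2 ≤ (m:ℝ) := Int.le_ceil _
  have hceil2 : (m:ℝ) < x - 1/2 + 1 := Int.ceil_lt_add_one _
  have hs12 : |x - (m:ℝ)| ≤ 1/2 := abs_le.mpr ⟨by linarith, by linarith⟩
  have hm0 : m ≠ 0 := by
    intro h
    rw [h] at hceil1 hceil2
    simp at hceil1 hceil2
    have : |x| ≤ 1/2 := abs_le.mpr ⟨by linarith, by linarith⟩
    linarith
  -- the main quantity
  set A : ℝ := |(m:ℝ)|^α with hAdef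
  have hm1 : (1:ℝ) ≤ |(m:ℝ)| := by
    have h1 : (1:ℤ) ≤ |m| := Int.one_le_abs hm0
    have : ((|m|:ℤ):ℝ) = |(m:ℝ)| := by push_cast; ring
    rw [← this]
    exact_mod_cast h1
  have hA1 : 1 ≤ A := by
    rw [hAdef, show (1:ℝ) = (1:ℝ)^α by rw [Real.one_rpow]]
    exact Real.rpow_le_rpow (by norm_num) hm1 hα.1
  have hA0 : 0 < A := by linarith
  set R : ℝ := A / (1 + A * |x - (m:ℝ)|) with hRdef
  have hR0 : 0 < R := by
    apply div_pos hA0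
    have : 0 ≤ A * |x - (m:ℝ)| := by positivity
    linarith
  -- per-term facts
  have haN : ∀ n : ℤ, n ≠ 0 → (1:ℝ) ≤ |(n:ℝ)|^α := by
    intro n hn
    have h1 : (1:ℤ) ≤ |n| := Int.one_le_abs hn
    have h2 : ((|n|:ℤ):ℝ) = |(n:ℝ)| := by push_cast; ring
    have h3 : (1:ℝ) ≤ |(n:ℝ)| := by rw [← h2]; exact_mod_cast h1
    rw [show (1:ℝ) = (1:ℝ)^α by rw [Real.one_rpow]]
    exact Real.rpow_le_rpow (by norm_num) h3 hα.1
  set f : ℤ → ℝ := fun n => thetaN α n x with hfdef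
  have hfeq : ∀ n : ℤ, ∃ a : ℝ, 1 ≤ a ∧ f n = (1/π) * gI a (x - n) ∧ (n ≠ 0 → a = |(n:ℝ)|^α) := by
    intro n
    by_cases hn : n = 0
    · exact ⟨1, le_rfl, by rw [hfdef]; simp only [hn]; simpa using theta_eq0 α x, fun h => absurd hn h⟩
    · exact ⟨|(n:ℝ)|^α, haN n hn, by rw [hfdef]; simpa using theta_eqn α n x hn, fun _ => rfl⟩
  have hf_nonneg : ∀ n : ℤ, 0 ≤ f n := by
    intro n
    obtain ⟨a, ha1, he, -⟩ := hfeq n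
    rw [he]
    exact mul_nonneg (by positivity) (gI_nonneg _ (by linarith))
  -- main term bounds
  have hfm : f m = (1/π) * gI A (x - m) := by
    obtain ⟨a, ha1, he, hs⟩ := hfeq m
    rw [he, hs hm0]
  have hmain_up : f m ≤ Real.log R + 9 := by
    rw [hfm]
    have h := gI_upper' (a := A) (s := x - m) hA1 (by linarith [hs12])
    rw [← hRdef] at h
    calc (1/π) * gI A (x - m) ≤ (1/π) * (π * Real.log R + 9*π) := by
          apply mul_le_mul_of_nonneg_left h (by positivity)
      _ = Real.log R + 9 := by field_simp
  have hmain_lo : Real.log R - 9 ≤ f m := by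
    rw [hfm]
    have h := gI_lower' (a := A) (s := x - m) hA1 hs12
    rw [← hRdef] at h
    calc Real.log R - 9 = (1/π) * (π * Real.log R - 9*π) := by field_simp
      _ ≤ (1/π) * gI A (x - m) := by
          apply mul_le_mul_of_nonneg_left h (by positivity)
  -- near terms
  have hdistlow : ∀ n : ℤ, n ≠ m → (|(n - m : ℤ)| : ℝ) - 1/2 ≤ |x - n| := by
    intro n hn
    have h1 : |(n:ℝ) - m| ≤ |x - n| + |x - m| := by
      have := abs_sub_abs_le_abs_sub ((n:ℝ) - x) ((m:ℝ) - x)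
      calc |(n:ℝ) - m| = |((n:ℝ) - x) - ((m:ℝ) - x)| := by ring_nf
        _ ≤ |(n:ℝ) - x| + |(m:ℝ) - x| := abs_sub _ _
        _ = |x - n| + |x - m| := by rw [abs_sub_comm ((n:ℝ)) x, abs_sub_comm ((m:ℝ)) x]
    have h2 : (|(n - m : ℤ)| : ℝ) = |(n:ℝ) - m| := by push_cast; ring
    rw [h2]
    linarith [hs12]
  have hdisthigh : ∀ n : ℤ, |x - n| ≤ (|(n - m : ℤ)| : ℝ) + 1/2 := by
    intro n
    have h1 : |x - n| ≤ |x - m| + |(m:ℝ) - n| := by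
      calc |x - (n:ℝ)| = |(x - m) + ((m:ℝ) - n)| := by ring_nf
        _ ≤ |x - (m:ℝ)| + |(m:ℝ) - n| := abs_add_le _ _
    have h2 : (|(n - m : ℤ)| : ℝ) = |(m:ℝ) - n| := by
      rw [← abs_neg]
      push_cast
      ring_nf
    rw [h2]
    linarith [hs12]
  have hnear : ∀ n : ℤ, n ≠ m → |n - m| ≤ 2 → f n ≤ 10 := by
    intro n hn hk
    obtain ⟨a, ha1, he, -⟩ := hfeq n
    have ha0 : 0 < a := by linarith
    have hk1 : (1:ℝ) ≤ (|(n - m : ℤ)| : ℝ) := by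
      have : (1:ℤ) ≤ |n - m| := Int.one_le_abs (sub_ne_zero.mpr hn)
      exact_mod_cast this
    have hk2 : (|(n - m : ℤ)| : ℝ) ≤ 2 := by exact_mod_cast hk
    have hd1 : (1:ℝ)/2 ≤ |x - n| := by linarith [hdistlow n hn, hk1]
    have hd2 : |x - n| ≤ 5/2 := by linarith [hdisthigh n]
    have h := gI_upper' (a := a) (s := x - n) ha1 hd2
    have hRn : a/(1 + a*|x - n|) ≤ 2 := by
      have hden : 0 < 1 + a*|x - n| := by positivity
      rw [div_le_iff₀ hden]
      nlinarith
    have hRn0 : 0 < a/(1 + a*|x - n|) := by positivity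
    have hlogRn : Real.log (a/(1 + a*|x - n|)) ≤ 1 := by
      calc Real.log (a/(1 + a*|x - n|)) ≤ Real.log 2 := Real.log_le_log hRn0 hRn
        _ ≤ 1 := by
            have := Real.log_le_sub_one_of_pos (x := (2:ℝ)) (by norm_num); linarith
    rw [he]
    calc (1/π) * gI a (x - n) ≤ (1/π) * (π * Real.log (a/(1 + a*|x - n|)) + 9*π) := by
          apply mul_le_mul_of_nonneg_left h (by positivity)
      _ = Real.log (a/(1 + a*|x - n|)) + 9 := by field_simp
      _ ≤ 10 := by linarith
  -- far terms
  have hfar : ∀ n : ℤ, 2 < |n - m| → f n ≤ 40/(((n - m : ℤ)):ℝ)^2 := by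
    intro n hk
    have hn : n ≠ m := by
      intro h; rw [h] at hk; simp at hk
    obtain ⟨a, ha1, he, -⟩ := hfeq n
    have hk3 : (3:ℝ) ≤ (|(n - m : ℤ)| : ℝ) := by exact_mod_cast hk
    have hd : (5:ℝ)/2 ≤ |x - n| := by linarith [hdistlow n hn, hk3]
    have h := gI_far' (a := a) (s := x - n) ha1 hd
    rw [he]
    have hgπ : (1/π) * gI a (x - n) ≤ gI a (x - n) := by
      have hg0 : 0 ≤ gI a (x - n) := gI_nonneg _ (by linarith)
      have h1π : 1/π ≤ 1 := by rw [div_le_one hπ0]; linarith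
      calc (1/π) * gI a (x - n) ≤ 1 * gI a (x - n) :=
            mul_le_mul_of_nonneg_right h1π hg0
        _ = gI a (x - n) := one_mul _
    have hsq : (((n - m : ℤ)):ℝ)^2 / 4 ≤ (x - n)^2 := by
      have h1 : (|(n - m : ℤ)| : ℝ)/2 ≤ |x - n| := by linarith [hdistlow n hn, hk3]
      have h2 : ((|(n - m : ℤ)| : ℝ)/2)^2 ≤ |x - n|^2 :=
        pow_le_pow_left₀ (by positivity) h1 2
      rw [sq_abs] at h2
      have h3 : (|(n - m : ℤ)| : ℝ)^2 = (((n - m : ℤ)):ℝ)^2 := by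
        push_cast [sq_abs]
        ring
      have h4 : ((|(n - m : ℤ)| : ℝ)/2)^2 = (|(n - m : ℤ)| : ℝ)^2/4 := by ring
      rw [h4, h3] at h2
      exact h2
    have hk0 : (0:ℝ) < (((n - m : ℤ)):ℝ)^2 := by
      have : ((n - m : ℤ):ℝ) ≠ 0 := by
        simp only [ne_eq, Int.cast_eq_zero, sub_eq_zero]
        exact hn
      positivity
    have hlast : 10/(x - n)^2 ≤ 40/(((n - m : ℤ)):ℝ)^2 := by
      have hxn0 : (0:ℝ) < (x - n)^2 := by linarith
      have hmono : 10/(x - n)^2 ≤ 10/((((n - m : ℤ)):ℝ)^2/4) :=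
        div_le_div_of_nonneg_left (by norm_num) (by linarith) hsq
      have heq : (10:ℝ)/((((n - m : ℤ)):ℝ)^2/4) = 40/(((n - m : ℤ)):ℝ)^2 := by
        rw [div_div_eq_mul_div]
        ring
      rw [heq] at hmono
      exact hmono
    linarith
  -- summability
  have hq40 : Summable (fun n : ℤ => 40/(((n - m : ℤ)):ℝ)^2) := by
    have h1 : Summable (fun k : ℤ => 40/((k:ℝ))^2) := by
      have h2 : Summable (fun n : ℤ => 1/((n:ℝ))^2) :=
        Real.summable_one_div_int_pow.mpr (by norm_num)
      exact (h2.mul_left 40).congr (fun k => by rw [mul_one_div])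
    have := ((Equiv.subRight m).summable_iff (f := fun k : ℤ => 40/((k:ℝ))^2)).mpr h1
    exact this.congr (fun n => rfl)
  have hF : Summable (fun n : ℤ => (if |n - m| ≤ 2 then f n else 0) + 40/(((n - m : ℤ)):ℝ)^2) := by
    apply Summable.add _ hq40
    apply summable_of_ne_finset_zero (s := Finset.Icc (m-2) (m+2))
    intro n hn
    rw [Finset.mem_Icc] at hn
    rw [if_neg]
    rw [abs_le]
    omega
  have hsum : Summable f := by
    apply Summable.of_nonneg_of_le hf_nonneg _ hF
    intro n
    by_cases h : |n - m| ≤ 2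
    · rw [if_pos h]
      have : (0:ℝ) ≤ 40/(((n - m : ℤ)):ℝ)^2 := by positivity
      linarith
    · rw [if_neg h, zero_add]
      exact hfar n (by omega)
  -- tsum bounds
  have hlow : Real.log R - 9 ≤ ∑' n : ℤ, f n := by
    have := Summable.le_tsum hsum m (fun b _ => hf_nonneg b)
    linarith
  have hup : (∑' n : ℤ, f n) ≤ Real.log R + 9 + T := by
    rw [Summable.tsum_eq_add_tsum_ite hsum m]
    have hg_nonneg : ∀ n : ℤ, 0 ≤ (if n = m then 0 else f n) := by
      intro n
      split_ifs
      · exact le_rfl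
      · exact hf_nonneg n
    have hgle : ∀ n : ℤ, (if n = m then 0 else f n) ≤ f n := by
      intro n
      split_ifs with h
      · rw [h]; exact hf_nonneg m
      · exact le_rfl
    have hgsum : Summable (fun n : ℤ => if n = m then 0 else f n) :=
      Summable.of_nonneg_of_le hg_nonneg hgle hsum
    have hhsum : Summable (fun n : ℤ => hfun (n - m)) := by
      have := ((Equiv.subRight m).summable_iff (f := hfun)).mpr hfun_summable
      exact this.congr (fun n => rfl)
    have hcomp : ∀ n : ℤ, (if n = m then 0 else f n) ≤ hfun (n - m) := by
      intro n
      by_cases hn : n = m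
      · rw [if_pos hn, hn]
        simp [hfun]
      · rw [if_neg hn]
        have hk0 : n - m ≠ 0 := sub_ne_zero.mpr hn
        by_cases hk : |n - m| ≤ 2
        · simp only [hfun]
          rw [if_neg hk0, if_pos hk]
          exact hnear n hn hk
        · simp only [hfun]
          rw [if_neg hk0, if_neg hk]
          exact hfar n (by omega)
    have h2 : (∑' n : ℤ, (if n = m then 0 else f n)) ≤ ∑' n : ℤ, hfun (n - m) :=
      Summable.tsum_le_tsum hcomp hgsum hhsum
    have h3 : (∑' n : ℤ, hfun (n - m)) = T := by
      rw [hTdef]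
      exact ((Equiv.subRight m).tsum_eq hfun)
    rw [h3] at h2
    linarith [hmain_up]
  constructor
  · have h1 : Real.exp (Real.log R - 9) ≤ Real.exp (∑' n : ℤ, f n) := Real.exp_le_exp.mpr hlow
    rw [Real.exp_sub, Real.exp_log hR0] at h1
    calc Real.exp (-9) * R = R / Real.exp 9 := by rw [Real.exp_neg]; ring
      _ ≤ Real.exp (∑' n : ℤ, f n) := h1
  · have h1 : Real.exp (∑' n : ℤ, f n) ≤ Real.exp (Real.log R + 9 + T) := Real.exp_le_exp.mpr hup
    rw [show Real.log R + 9 + T = Real.log R + (9 + T) by ring, Real.exp_add,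
      Real.exp_log hR0] at h1
    calc Real.exp (∑' n : ℤ, f n) ≤ R * Real.exp (9+T) := h1
      _ = Real.exp (9+T) * R := by ring
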